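/- Let s > 0, c > 0 and ε₀ > 0. Then there exists a constant C > 0, depending only on s, c and ε₀, such that for all real numbers A, B, β ≥ 0 satisfying β ≤ B and β ≤ (c/ε)·A + ε^s·B for every ε ∈ (0, ε₀], one has β ≤ C·A^{s/(1+s)}·B^{1/(1+s)}. -/

import Mathlib

open Set

/-- interpolation-type inequality deduced from a family of
`β ≤ (c/ε)·A + ε^s·B` estimates (Lemma 2.3 / Corollary 2.1 (i) of Bourgeois). -/
theorem stmt_5 (s c ε₀ : ℝ) (hs : 0 < s) (hc : 0 < c) (hε₀ : 0 < ε₀) :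
    ∃ C > 0, ∀ A B β : ℝ, 0 ≤ A → 0 ≤ B → 0 ≤ β → β ≤ B →
      (∀ ε : ℝ, ε ∈ Ioc 0 ε₀ → β ≤ c / ε * A + ε ^ s * B) →
      β ≤ C * A ^ (s / (1 + s)) * B ^ (1 / (1 + s)) := by
  have h1s : (0:ℝ) < 1 + s := by linarith
  set t := s / (1 + s) with ht
  set u := 1 / (1 + s) with hu
  have htpos : 0 < t := div_pos hs h1s
  have hupos : 0 < u := by positivity
  have htu : t + u = 1 := by rw [ht, hu, ← add_div, add_comm, div_self (ne_of_gt h1s)]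
  have hus : u * s = t := by rw [ht, hu, one_div, inv_mul_eq_div]
  have hu1s : u * (1 + s) = 1 := by rw [hu]; field_simp
  have h1st : (1 + s) * t = s := by rw [ht]; field_simp
  refine ⟨max (c + 1) (ε₀ ^ (-s)), lt_max_of_lt_left (by linarith), ?_⟩
  intro A B β hA hB hβ hβB hfam
  rcases eq_or_lt_of_le hB with hB0 | hBpos
  · -- B = 0
    have hb : β ≤ 0 := by rw [← hB0] at hβB; exact hβB
    rw [← hB0, Real.zero_rpow (ne_of_gt hupos), mul_zero]
    exact hb
  rcases eq_or_lt_of_le hA with hA0 | hApos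
  · -- A = 0
    have hβ0 : β ≤ 0 := by
      by_contra h
      push_neg at h
      have hB2 : 0 < 2 * B := by linarith
      set ε := min ε₀ ((β / (2 * B)) ^ (1 / s)) with hε
      have hq : 0 < β / (2 * B) := div_pos h hB2
      have hεpos : 0 < ε := lt_min hε₀ (Real.rpow_pos_of_pos hq _)
      have hmem : ε ∈ Ioc 0 ε₀ := ⟨hεpos, min_le_left _ _⟩
      have hεs : ε ^ s ≤ β / (2 * B) := by
        have h2 : ε ≤ (β / (2 * B)) ^ (1 / s) := min_le_right _ _
        have h3 := Real.rpow_le_rpow (le_of_lt hεpos) h2 (le_of_lt hs)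
        rwa [← Real.rpow_mul (le_of_lt hq), one_div,
          inv_mul_cancel₀ (ne_of_gt hs), Real.rpow_one] at h3
      have hle := hfam ε hmem
      rw [← hA0, mul_zero, zero_add] at hle
      have hf : ε ^ s * B ≤ β / 2 := by
        calc ε ^ s * B ≤ β / (2 * B) * B :=
              mul_le_mul_of_nonneg_right hεs (le_of_lt hBpos)
          _ = β / 2 := by field_simp
      linarith
    rw [← hA0, Real.zero_rpow (ne_of_gt htpos), mul_zero, zero_mul]
    exact hβ0
  -- A > 0, B > 0
  set ε := (A / B) ^ u with hεdef
  have hABpos : 0 < A / B := div_pos hApos hBpos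
  have hεpos : 0 < ε := Real.rpow_pos_of_pos hABpos _
  have hεs : ε ^ s * B = A ^ t * B ^ u := by
    rw [hεdef, ← Real.rpow_mul (le_of_lt hABpos), hus,
      Real.div_rpow hA hB, div_mul_eq_mul_div, mul_div_assoc]
    congr 1
    nth_rewrite 1 [← Real.rpow_one B]
    rw [← Real.rpow_sub hBpos]
    congr 1
    linarith
  have hAsplit : A ^ t * A ^ u = A := by
    rw [← Real.rpow_add hApos, htu, Real.rpow_one]
  have hAupos : 0 < A ^ u := Real.rpow_pos_of_pos hApos _
  have hcε : c / ε * A = c * (A ^ t * B ^ u) := by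
    rw [hεdef, Real.div_rpow hA hB, div_div_eq_mul_div, div_mul_eq_mul_div,
      div_eq_iff (ne_of_gt hAupos)]
    nth_rewrite 1 [← hAsplit]
    ring
  rcases le_or_gt ε ε₀ with hεle | hεgt
  · have hle := hfam ε ⟨hεpos, hεle⟩
    rw [hεs, hcε] at hle
    have hAB : 0 ≤ A ^ t * B ^ u := by positivity
    calc β ≤ (c + 1) * (A ^ t * B ^ u) := by linarith [hle]
      _ ≤ max (c + 1) (ε₀ ^ (-s)) * (A ^ t * B ^ u) :=
          mul_le_mul_of_nonneg_right (le_max_left _ _) hAB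
      _ = max (c + 1) (ε₀ ^ (-s)) * A ^ t * B ^ u := by ring
  · -- ε₀ < ε
    have hA' : ε₀ ^ (1 + s) < A / B := by
      have h3 := Real.rpow_lt_rpow (le_of_lt hε₀) hεgt h1s
      rwa [hεdef, ← Real.rpow_mul (le_of_lt hABpos), hu1s, Real.rpow_one] at h3
    have hBt : B ^ t ≤ ε₀ ^ (-s) * A ^ t := by
      have hBle : B ≤ A / ε₀ ^ (1 + s) := by
        rw [le_div_iff₀ (Real.rpow_pos_of_pos hε₀ _)]
        calc B * ε₀ ^ (1 + s) ≤ B * (A / B) := by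
              exact mul_le_mul_of_nonneg_left (le_of_lt hA') (le_of_lt hBpos)
          _ = A := by field_simp
      have h4 := Real.rpow_le_rpow hB hBle (le_of_lt htpos)
      rw [Real.div_rpow hA (le_of_lt (Real.rpow_pos_of_pos hε₀ _)),
        ← Real.rpow_mul (le_of_lt hε₀), h1st, div_eq_mul_inv,
        ← Real.rpow_neg (le_of_lt hε₀), mul_comm] at h4
      exact h4
    have hBsplit : B = B ^ t * B ^ u := by
      rw [← Real.rpow_add hBpos, htu, Real.rpow_one]
    calc β ≤ B := hβB
      _ = B ^ t * B ^ u := hBsplit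
      _ ≤ (ε₀ ^ (-s) * A ^ t) * B ^ u :=
          mul_le_mul_of_nonneg_right hBt (le_of_lt (Real.rpow_pos_of_pos hBpos _))
      _ ≤ max (c + 1) (ε₀ ^ (-s)) * A ^ t * B ^ u := by
          have : ε₀ ^ (-s) * A ^ t ≤ max (c + 1) (ε₀ ^ (-s)) * A ^ t :=
            mul_le_mul_of_nonneg_right (le_max_right _ _) (by positivity)
          exact mul_le_mul_of_nonneg_right this (by positivity)
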